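/- Strong law of large numbers with weak correlations (Lyons): if (Y_n) are real random variables with |Y_n| ≤ 1 a.s. and E(Y_m Y_n) ≤ Φ(|n − m|) for a nonnegative function Φ with Σ_{n≥1} Φ(n)/n < ∞, then (1/n) Σ_{k=1}^n Y_k → 0 almost surely. -/

import Mathlib

open MeasureTheory ProbabilityTheory Filter

lemma lyons_telescope (d M : ℕ) (hd : 1 ≤ d) :
    ∑ N ∈ Finset.Icc d M, (1:ℝ)/(N:ℝ)^2 ≤ 2/(d:ℝ) := by
  have h1 : ∀ N ∈ Finset.Icc d M, (1:ℝ)/(N:ℝ)^2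
      ≤ 2*((1:ℝ)/((N:ℕ):ℝ) - 1/(((N:ℕ):ℝ)+1)) := by
    intro N hN
    have hN1 : 1 ≤ N := le_trans hd (Finset.mem_Icc.1 hN).1
    have hNpos : (0:ℝ) < N := by exact_mod_cast hN1
    have heq : (1:ℝ)/(N:ℝ) - 1/((N:ℝ)+1) = 1/((N:ℝ)*((N:ℝ)+1)) := by
      field_simp; ring
    rw [heq]
    have hN1' : (1:ℝ) ≤ (N:ℝ) := by exact_mod_cast hN1
    rw [mul_one_div, div_le_div_iff₀ (by positivity) (by positivity)]
    nlinarith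
  calc ∑ N ∈ Finset.Icc d M, (1:ℝ)/(N:ℝ)^2
      ≤ ∑ N ∈ Finset.Icc d M, 2*((1:ℝ)/((N:ℕ):ℝ) - 1/(((N:ℕ):ℝ)+1)) :=
        Finset.sum_le_sum h1
    _ = 2 * ∑ N ∈ Finset.Icc d M, ((1:ℝ)/((N:ℕ):ℝ) - 1/(((N:ℕ):ℝ)+1)) := by
        rw [Finset.mul_sum]
    _ ≤ 2 * (1/(d:ℝ)) := by
        have htel : ∑ N ∈ Finset.Icc d M, ((1:ℝ)/((N:ℕ):ℝ) - 1/(((N:ℕ):ℝ)+1))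
            = 1/(d:ℝ) - 1/(((d + (M+1-d) : ℕ)):ℝ) := by
          rw [← Finset.Ico_add_one_right_eq_Icc, Finset.sum_Ico_eq_sum_range]
          have := Finset.sum_range_sub' (f := fun i => (1:ℝ)/(((d+i : ℕ)):ℝ)) (n := M+1-d)
          rw [show 1/((d:ℝ)) - 1/(((d + (M+1-d) : ℕ)):ℝ)
              = 1/(((d+0:ℕ)):ℝ) - 1/(((d + (M+1-d) : ℕ)):ℝ) by norm_num]
          rw [← this]
          apply Finset.sum_congr rfl
          intro i _
          push_cast
          ring
        rw [htel]
        have : (0:ℝ) ≤ 1/(((d + (M+1-d) : ℕ)):ℝ) := by positivity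
        linarith
    _ = 2/(d:ℝ) := by ring

lemma lyons_sum_Icc_one (f : ℕ → ℝ) (M : ℕ) :
    ∑ N ∈ Finset.Icc 1 M, f N = ∑ N ∈ Finset.range M, f (N+1) := by
  rw [← Finset.Ico_add_one_right_eq_Icc, Finset.sum_Ico_eq_sum_range]
  simp only [Nat.add_sub_cancel]
  exact Finset.sum_congr rfl fun i _ => by rw [add_comm 1 i]

lemma lyons_summable_aux (Φ : ℕ → ℝ) (hΦ : ∀ n, 0 ≤ Φ n)
    (hsum : Summable (fun n : ℕ => Φ (n + 1) / (n + 1))) :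
    Summable (fun N : ℕ => (∑ d ∈ Finset.Icc 1 N, Φ d) / (N:ℝ)^2) := by
  rw [← summable_nat_add_iff 1]
  apply summable_of_sum_range_le (c := 2 * ∑' n : ℕ, Φ (n+1)/(n+1))
  · intro n
    have : 0 ≤ ∑ d ∈ Finset.Icc 1 (n+1), Φ d := Finset.sum_nonneg fun d _ => hΦ d
    positivity
  · intro M
    have h0 := lyons_sum_Icc_one (fun N => (∑ d ∈ Finset.Icc 1 N, Φ d) / (N:ℝ)^2) M
    rw [← h0]
    have h1 : ∑ N ∈ Finset.Icc 1 M, (∑ d ∈ Finset.Icc 1 N, Φ d)/(N:ℝ)^2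
        = ∑ N ∈ Finset.Icc 1 M, ∑ d ∈ Finset.Icc 1 N, Φ d/(N:ℝ)^2 :=
      Finset.sum_congr rfl fun N _ => Finset.sum_div _ _ _
    rw [h1]
    rw [Finset.sum_comm' (s' := fun d => Finset.Icc d M) (t' := Finset.Icc 1 M)
      (by intro x y; simp only [Finset.mem_Icc]; omega)]
    have h2 : ∀ d ∈ Finset.Icc 1 M, ∑ N ∈ Finset.Icc d M, Φ d/(N:ℝ)^2 ≤ 2*(Φ d/(d:ℝ)) := by
      intro d hd
      obtain ⟨hd1, _⟩ := Finset.mem_Icc.1 hd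
      have he : ∑ N ∈ Finset.Icc d M, Φ d/(N:ℝ)^2
          = Φ d * ∑ N ∈ Finset.Icc d M, 1/(N:ℝ)^2 := by
        rw [Finset.mul_sum]
        exact Finset.sum_congr rfl fun N _ => (mul_one_div _ _).symm
      rw [he]
      calc Φ d * ∑ N ∈ Finset.Icc d M, 1/(N:ℝ)^2
          ≤ Φ d * (2/(d:ℝ)) :=
            mul_le_mul_of_nonneg_left (lyons_telescope d M hd1) (hΦ d)
        _ = 2*(Φ d/(d:ℝ)) := by ring
    calc ∑ d ∈ Finset.Icc 1 M, ∑ N ∈ Finset.Icc d M, Φ d/(N:ℝ)^2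
        ≤ ∑ d ∈ Finset.Icc 1 M, 2*(Φ d/(d:ℝ)) := Finset.sum_le_sum h2
      _ = 2 * ∑ d ∈ Finset.Icc 1 M, Φ d/(d:ℝ) := by rw [Finset.mul_sum]
      _ ≤ 2 * ∑' n : ℕ, Φ (n+1)/(n+1) := by
          have h3 := lyons_sum_Icc_one (fun d => Φ d/(d:ℝ)) M
          rw [h3]
          have h4 : ∑ N ∈ Finset.range M, Φ (N+1)/(((N+1:ℕ)):ℝ)
              = ∑ N ∈ Finset.range M, Φ (N+1)/((N:ℝ)+1) :=
            Finset.sum_congr rfl fun N _ => by push_cast; ring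
          rw [h4]
          have h5 := Summable.sum_le_tsum (Finset.range M)
            (fun i _ => div_nonneg (hΦ _) (by positivity)) hsum
          linarith

lemma lyons_det (S : ℕ → ℝ)
    (hdrift : ∀ n m : ℕ, 1 ≤ n → n ≤ m → |S m - S n| ≤ (m:ℝ) - n)
    (hsum : Summable (fun N : ℕ => (S N)^2 / (N:ℝ)^3)) :
    Filter.Tendsto (fun n : ℕ => S n / n) Filter.atTop (nhds 0) := by
  by_contra hc
  rw [Metric.tendsto_atTop] at hc
  push_neg at hc
  obtain ⟨ε, hε, hfreq⟩ := hc
  set e := min ε 1 with he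
  have he0 : 0 < e := lt_min hε one_pos
  have he1 : e ≤ 1 := min_le_right _ _
  set t : ℕ → ℝ := fun N => (S N)^2/(N:ℝ)^3 with ht
  have htnn : ∀ N, 0 ≤ t N := fun N => by positivity
  set T := ∑' N, t N with hT
  have hpartial := hsum.hasSum.tendsto_sum_nat
  obtain ⟨K0, hK0⟩ := Metric.tendsto_atTop.1 hpartial (e^3/64) (by positivity)
  obtain ⟨n, hn, hna⟩ := hfreq (max K0 1)
  have hn1 : 1 ≤ n := le_trans (le_max_right _ _) hn
  have hnK : K0 ≤ n := le_trans (le_max_left _ _) hn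
  have hnpos : (0:ℝ) < n := by exact_mod_cast hn1
  have hSn : e * n ≤ |S n| := by
    have h1 : ε ≤ |S n / n| := by
      have := hna
      rwa [Real.dist_eq, sub_zero] at this
    have h2 : e ≤ |S n| / n := by
      rw [abs_div, abs_of_pos hnpos] at h1
      exact le_trans (min_le_left _ _) h1
    calc e * n ≤ (|S n| / n) * n := by nlinarith
      _ = |S n| := by field_simp
  set L : ℕ := ⌊e * n / 2⌋₊ with hL
  have hLle : (L:ℝ) ≤ e * n / 2 := Nat.floor_le (by positivity)
  have hLge : e * n / 2 < (L:ℝ) + 1 := Nat.lt_floor_add_one _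
  have hterm : ∀ k ∈ Finset.Icc n (n+L), e^2/(32*n) ≤ t k := by
    intro k hk
    obtain ⟨hk1, hk2⟩ := Finset.mem_Icc.1 hk
    have hknr : (n:ℝ) ≤ k := by exact_mod_cast hk1
    have hkpos : (0:ℝ) < k := lt_of_lt_of_le hnpos hknr
    have hdk : |S k - S n| ≤ (k:ℝ) - n := hdrift n k hn1 hk1
    have hkL : (k:ℝ) ≤ n + L := by exact_mod_cast hk2
    have hSk : e*n/2 ≤ |S k| := by
      have h3 : |S n| - |S k| ≤ (k:ℝ) - n := by
        have h4 := abs_sub_abs_le_abs_sub (S n) (S k)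
        rw [abs_sub_comm] at h4
        linarith
      linarith
    have hk2n : (k:ℝ) ≤ 2*n := by nlinarith
    have h3 : (k:ℝ)^3 ≤ 8*(n:ℝ)^3 := by
      have h5 := pow_le_pow_left₀ (le_of_lt hkpos) hk2n 3
      nlinarith [h5]
    have hnum : (e*n/2)^2 ≤ (S k)^2 := by
      have := sq_abs (S k)
      nlinarith [abs_nonneg (S k)]
    have : t k = (S k)^2/(k:ℝ)^3 := rfl
    rw [this]
    calc e^2/(32*n) = (e*n/2)^2/(8*(n:ℝ)^3) := by field_simp; ring
      _ ≤ (S k)^2/(k:ℝ)^3 := by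
          apply div_le_div₀ (sq_nonneg _) hnum (by positivity) h3
  have hwin : e^3/64 < ∑ k ∈ Finset.Icc n (n+L), t k := by
    have hcard : (Finset.Icc n (n+L)).card = L+1 := by
      rw [Nat.card_Icc]; omega
    have h1 : ((L:ℝ)+1) * (e^2/(32*n)) ≤ ∑ k ∈ Finset.Icc n (n+L), t k := by
      have := Finset.card_nsmul_le_sum (Finset.Icc n (n+L)) t (e^2/(32*n)) hterm
      rw [hcard] at this
      rw [nsmul_eq_mul] at this
      push_cast at this
      linarith
    have h2 : e^3/64 < ((L:ℝ)+1) * (e^2/(32*n)) := by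
      have hq : (0:ℝ) < e^2/(32*n) := by positivity
      have : e*n/2 * (e^2/(32*n)) = e^3/64 := by field_simp; ring
      nlinarith
    linarith
  have hub : ∑ k ∈ Finset.Icc n (n+L), t k ≤ T - ∑ i ∈ Finset.range n, t i := by
    have hsplit : ∑ i ∈ Finset.range n, t i + ∑ k ∈ Finset.Icc n (n+L), t k
        = ∑ i ∈ Finset.range (n+L+1), t i := by
      have hic : Finset.Icc n (n+L) = Finset.Ico n (n+L+1) := by
        rw [Finset.Ico_add_one_right_eq_Icc]
      simp only [Finset.range_eq_Ico, hic]
      exact Finset.sum_Ico_consecutive _ (Nat.zero_le n) (by omega)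
    have hle : ∑ i ∈ Finset.range (n+L+1), t i ≤ T :=
      Summable.sum_le_tsum _ (fun i _ => htnn i) hsum
    linarith
  have hKb : |∑ i ∈ Finset.range n, t i - T| < e^3/64 := by
    have := hK0 n hnK
    rwa [Real.dist_eq] at this
  have : T - ∑ i ∈ Finset.range n, t i < e^3/64 := by
    rcases abs_lt.1 hKb with ⟨h1, h2⟩
    linarith
  linarith

lemma lyons_distsum (Φ : ℕ → ℝ) (hΦ : ∀ n, 0 ≤ Φ n) (N m : ℕ) (hm : m ∈ Finset.Icc 1 N) :
    ∑ n ∈ Finset.Icc 1 N, Φ (Nat.dist n m) ≤ Φ 0 + 2 * ∑ d ∈ Finset.Icc 1 N, Φ d := by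
  classical
  obtain ⟨hm1, hmN⟩ := Finset.mem_Icc.1 hm
  rw [← Finset.add_sum_erase _ _ hm, Nat.dist_self]
  have key : ∑ n ∈ (Finset.Icc 1 N).erase m, Φ (Nat.dist n m)
      ≤ 2 * ∑ d ∈ Finset.Icc 1 N, Φ d := by
    rw [← Finset.sum_filter_add_sum_filter_not ((Finset.Icc 1 N).erase m) (· < m)]
    have hA : ∑ n ∈ ((Finset.Icc 1 N).erase m).filter (· < m), Φ (Nat.dist n m)
        ≤ ∑ d ∈ Finset.Icc 1 N, Φ d := by
      have hinj : ∀ x ∈ ((Finset.Icc 1 N).erase m).filter (· < m),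
          ∀ y ∈ ((Finset.Icc 1 N).erase m).filter (· < m),
          Nat.dist x m = Nat.dist y m → x = y := by
        intro x hx y hy hxy
        simp only [Finset.mem_filter, Finset.mem_erase, Finset.mem_Icc] at hx hy
        rw [Nat.dist_eq_sub_of_le (le_of_lt hx.2), Nat.dist_eq_sub_of_le (le_of_lt hy.2)] at hxy
        omega
      rw [← Finset.sum_image (f := Φ) (g := fun n => Nat.dist n m) hinj]
      apply Finset.sum_le_sum_of_subset_of_nonneg
      · intro d hd
        simp only [Finset.mem_image, Finset.mem_filter, Finset.mem_erase, Finset.mem_Icc] at hd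
        obtain ⟨x, ⟨⟨hxm, hx1, hxN⟩, hxlt⟩, hdx⟩ := hd
        rw [Nat.dist_eq_sub_of_le (le_of_lt hxlt)] at hdx
        simp only [Finset.mem_Icc]
        omega
      · intro i _ _
        exact hΦ i
    have hB : ∑ n ∈ ((Finset.Icc 1 N).erase m).filter (fun n => ¬ n < m), Φ (Nat.dist n m)
        ≤ ∑ d ∈ Finset.Icc 1 N, Φ d := by
      have hinj : ∀ x ∈ ((Finset.Icc 1 N).erase m).filter (fun n => ¬ n < m),
          ∀ y ∈ ((Finset.Icc 1 N).erase m).filter (fun n => ¬ n < m),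
          Nat.dist x m = Nat.dist y m → x = y := by
        intro x hx y hy hxy
        simp only [Finset.mem_filter, Finset.mem_erase, Finset.mem_Icc] at hx hy
        rw [Nat.dist_eq_sub_of_le_right (by omega), Nat.dist_eq_sub_of_le_right (by omega)] at hxy
        omega
      rw [← Finset.sum_image (f := Φ) (g := fun n => Nat.dist n m) hinj]
      apply Finset.sum_le_sum_of_subset_of_nonneg
      · intro d hd
        simp only [Finset.mem_image, Finset.mem_filter, Finset.mem_erase, Finset.mem_Icc] at hd
        obtain ⟨x, ⟨⟨hxm, hx1, hxN⟩, hxlt⟩, hdx⟩ := hd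
        rw [Nat.dist_eq_sub_of_le_right (by omega)] at hdx
        simp only [Finset.mem_Icc]
        omega
      · intro i _ _
        exact hΦ i
    linarith
  linarith

/-- Lyons: strong law of large numbers under weak correlations:
if |Y_n| ≤ 1 a.s. and E(Y_m Y_n) ≤ Φ(|n-m|) with Φ ≥ 0 and Σ_{n≥1} Φ(n)/n < ∞,
then (1/n) Σ_{k=1}^n Y_k → 0 almost surely. -/
theorem stmt10 {Ω : Type*} [MeasurableSpace Ω] (μ : Measure Ω)
    [IsProbabilityMeasure μ] (Y : ℕ → Ω → ℝ) (Φ : ℕ → ℝ)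
    (hmeas : ∀ n, Measurable (Y n))
    (hbdd : ∀ n, 1 ≤ n → ∀ᵐ ω ∂μ, |Y n ω| ≤ 1)
    (hΦ : ∀ n, 0 ≤ Φ n)
    (hsum : Summable (fun n : ℕ => Φ (n + 1) / (n + 1)))
    (hcorr : ∀ m n, 1 ≤ m → 1 ≤ n → ∫ ω, Y m ω * Y n ω ∂μ ≤ Φ (Nat.dist n m)) :
    ∀ᵐ ω ∂μ, Tendsto (fun n : ℕ => (∑ k ∈ Finset.Icc 1 n, Y k ω) / n)
      atTop (nhds 0) := by
  classical
  have hprod : ∀ m n, 1 ≤ m → 1 ≤ n → Integrable (fun ω => Y m ω * Y n ω) μ := by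
    intro m n hm hn
    apply Integrable.mono' (integrable_const (1:ℝ))
      (((hmeas m).mul (hmeas n)).aestronglyMeasurable)
    filter_upwards [hbdd m hm, hbdd n hn] with ω h1 h2
    rw [Real.norm_eq_abs, Pi.mul_apply, abs_mul]
    calc |Y m ω| * |Y n ω| ≤ 1 * 1 := mul_le_mul h1 h2 (abs_nonneg _) zero_le_one
      _ = 1 := one_mul 1
  have hSsq_eq : ∀ N (ω : Ω), (∑ k ∈ Finset.Icc 1 N, Y k ω)^2
      = ∑ m ∈ Finset.Icc 1 N, ∑ n ∈ Finset.Icc 1 N, Y m ω * Y n ω := by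
    intro N ω
    rw [sq, Finset.sum_mul_sum]
  have hSsqint : ∀ N, Integrable (fun ω => (∑ k ∈ Finset.Icc 1 N, Y k ω)^2) μ := by
    intro N
    have heq : (fun ω => (∑ k ∈ Finset.Icc 1 N, Y k ω)^2)
        = fun ω => ∑ m ∈ Finset.Icc 1 N, ∑ n ∈ Finset.Icc 1 N, Y m ω * Y n ω :=
      funext (hSsq_eq N)
    rw [heq]
    apply integrable_finset_sum
    intro m hm
    apply integrable_finset_sum
    intro n hn
    exact hprod m n (Finset.mem_Icc.1 hm).1 (Finset.mem_Icc.1 hn).1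
  have hexp : ∀ N, ∫ ω, (∑ k ∈ Finset.Icc 1 N, Y k ω)^2 ∂μ
      ≤ (N:ℝ) * (Φ 0 + 2 * ∑ d ∈ Finset.Icc 1 N, Φ d) := by
    intro N
    have h1 : ∫ ω, (∑ k ∈ Finset.Icc 1 N, Y k ω)^2 ∂μ
        = ∑ m ∈ Finset.Icc 1 N, ∑ n ∈ Finset.Icc 1 N, ∫ ω, Y m ω * Y n ω ∂μ := by
      simp_rw [hSsq_eq]
      rw [integral_finset_sum _ (fun m hm => integrable_finset_sum _
        (fun n hn => hprod m n (Finset.mem_Icc.1 hm).1 (Finset.mem_Icc.1 hn).1))]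
      exact Finset.sum_congr rfl fun m hm => integral_finset_sum _
        (fun n hn => hprod m n (Finset.mem_Icc.1 hm).1 (Finset.mem_Icc.1 hn).1)
    rw [h1]
    calc ∑ m ∈ Finset.Icc 1 N, ∑ n ∈ Finset.Icc 1 N, ∫ ω, Y m ω * Y n ω ∂μ
        ≤ ∑ m ∈ Finset.Icc 1 N, ∑ n ∈ Finset.Icc 1 N, Φ (Nat.dist n m) := by
          apply Finset.sum_le_sum
          intro m hm
          apply Finset.sum_le_sum
          intro n hn
          exact hcorr m n (Finset.mem_Icc.1 hm).1 (Finset.mem_Icc.1 hn).1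
      _ ≤ ∑ m ∈ Finset.Icc 1 N, (Φ 0 + 2 * ∑ d ∈ Finset.Icc 1 N, Φ d) :=
          Finset.sum_le_sum fun m hm => lyons_distsum Φ hΦ N m hm
      _ = (N:ℝ) * (Φ 0 + 2 * ∑ d ∈ Finset.Icc 1 N, Φ d) := by
          rw [Finset.sum_const, Nat.card_Icc, Nat.add_sub_cancel, nsmul_eq_mul]
  have hgint : ∀ N, Integrable (fun ω => (∑ k ∈ Finset.Icc 1 N, Y k ω)^2 / (N:ℝ)^3) μ :=
    fun N => (hSsqint N).div_const _
  have hgbdd : ∀ N, ∫ ω, (∑ k ∈ Finset.Icc 1 N, Y k ω)^2 / (N:ℝ)^3 ∂μ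
      ≤ Φ 0 * ((N:ℝ)^2)⁻¹ + 2 * ((∑ d ∈ Finset.Icc 1 N, Φ d) / (N:ℝ)^2) := by
    intro N
    rw [integral_div]
    rcases Nat.eq_zero_or_pos N with h0 | hNp
    · subst h0
      simp
    · have hN : (0:ℝ) < N := by exact_mod_cast hNp
      rw [div_le_iff₀ (by positivity)]
      calc ∫ ω, (∑ k ∈ Finset.Icc 1 N, Y k ω)^2 ∂μ
          ≤ (N:ℝ) * (Φ 0 + 2 * ∑ d ∈ Finset.Icc 1 N, Φ d) := hexp N
        _ = (Φ 0 * ((N:ℝ)^2)⁻¹ + 2 * ((∑ d ∈ Finset.Icc 1 N, Φ d) / (N:ℝ)^2)) * (N:ℝ)^3 := by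
            field_simp
  have hbnn : ∀ N : ℕ, 0 ≤ Φ 0 * ((N:ℝ)^2)⁻¹
      + 2 * ((∑ d ∈ Finset.Icc 1 N, Φ d) / (N:ℝ)^2) := by
    intro N
    have h1 : 0 ≤ ∑ d ∈ Finset.Icc 1 N, Φ d := Finset.sum_nonneg fun d _ => hΦ d
    have h0 := hΦ 0
    positivity
  have hbsum : Summable (fun N : ℕ => Φ 0 * ((N:ℝ)^2)⁻¹
      + 2 * ((∑ d ∈ Finset.Icc 1 N, Φ d) / (N:ℝ)^2)) := by
    apply Summable.add
    · have := ((Real.summable_one_div_nat_pow (p := 2)).2 one_lt_two).mul_left (Φ 0)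
      simpa [one_div] using this
    · exact (lyons_summable_aux Φ hΦ hsum).mul_left 2
  have hnn : ∀ (N : ℕ) (ω : Ω), 0 ≤ (∑ k ∈ Finset.Icc 1 N, Y k ω)^2 / (N:ℝ)^3 := by
    intro N ω
    positivity
  have hmg : ∀ N : ℕ, Measurable (fun ω => (∑ k ∈ Finset.Icc 1 N, Y k ω)^2 / (N:ℝ)^3) := by
    intro N
    exact ((Finset.measurable_sum _ (fun k _ => hmeas k)).pow_const 2).div_const _
  have hae : ∀ᵐ ω ∂μ, Summable
      (fun N : ℕ => (∑ k ∈ Finset.Icc 1 N, Y k ω)^2 / (N:ℝ)^3) := by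
    have key : ∫⁻ ω, ∑' N : ℕ,
        ENNReal.ofReal ((∑ k ∈ Finset.Icc 1 N, Y k ω)^2 / (N:ℝ)^3) ∂μ ≠ ⊤ := by
      rw [lintegral_tsum (fun N => ((hmg N).ennreal_ofReal).aemeasurable)]
      have heq : ∀ N : ℕ, ∫⁻ ω, ENNReal.ofReal ((∑ k ∈ Finset.Icc 1 N, Y k ω)^2 / (N:ℝ)^3) ∂μ
          = ENNReal.ofReal (∫ ω, (∑ k ∈ Finset.Icc 1 N, Y k ω)^2 / (N:ℝ)^3 ∂μ) :=
        fun N => (ofReal_integral_eq_lintegral_ofReal (hgint N)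
          (Filter.Eventually.of_forall fun ω => hnn N ω)).symm
      simp_rw [heq]
      apply ne_top_of_le_ne_top ?top (ENNReal.tsum_le_tsum
        (fun N => ENNReal.ofReal_le_ofReal (hgbdd N)))
      case top =>
        rw [← ENNReal.ofReal_tsum_of_nonneg hbnn hbsum]
        exact ENNReal.ofReal_ne_top
    have hmeasG : Measurable (fun ω => ∑' N : ℕ,
        ENNReal.ofReal ((∑ k ∈ Finset.Icc 1 N, Y k ω)^2 / (N:ℝ)^3)) :=
      Measurable.ennreal_tsum (fun N => (hmg N).ennreal_ofReal)
    filter_upwards [ae_lt_top hmeasG key] with ω hω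
    have hsummable := ENNReal.summable_toReal hω.ne
    refine hsummable.congr fun N => ?_
    exact ENNReal.toReal_ofReal (hnn N ω)
  have haeY : ∀ᵐ ω ∂μ, ∀ n, 1 ≤ n → |Y n ω| ≤ 1 := by
    rw [MeasureTheory.ae_all_iff]
    intro n
    rcases Nat.eq_zero_or_pos n with h | h
    · subst h
      filter_upwards with ω h
      omega
    · filter_upwards [hbdd n h] with ω hω _
      exact hω
  filter_upwards [hae, haeY] with ω h1 h2
  have hdrift : ∀ a b : ℕ, 1 ≤ a → a ≤ b →
      |(∑ k ∈ Finset.Icc 1 b, Y k ω) - ∑ k ∈ Finset.Icc 1 a, Y k ω| ≤ (b:ℝ) - a := by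
    intro a b ha hab
    have hsplit : ∑ k ∈ Finset.Icc 1 a, Y k ω + ∑ k ∈ Finset.Ico (a+1) (b+1), Y k ω
        = ∑ k ∈ Finset.Icc 1 b, Y k ω := by
      have hh1 : Finset.Icc 1 a = Finset.Ico 1 (a+1) := by rw [Finset.Ico_add_one_right_eq_Icc]
      have hh2 : Finset.Icc 1 b = Finset.Ico 1 (b+1) := by rw [Finset.Ico_add_one_right_eq_Icc]
      rw [hh1, hh2]
      exact Finset.sum_Ico_consecutive _ (by omega) (by omega)
    have habs : |∑ k ∈ Finset.Ico (a+1) (b+1), Y k ω| ≤ (b:ℝ) - a := by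
      calc |∑ k ∈ Finset.Ico (a+1) (b+1), Y k ω|
          ≤ ∑ k ∈ Finset.Ico (a+1) (b+1), |Y k ω| := Finset.abs_sum_le_sum_abs _ _
        _ ≤ ∑ _k ∈ Finset.Ico (a+1) (b+1), (1:ℝ) := Finset.sum_le_sum (fun k hk => h2 k (by
            have := (Finset.mem_Ico.1 hk).1
            omega))
        _ = ((b - a : ℕ) : ℝ) := by
            rw [Finset.sum_const, Nat.card_Ico, nsmul_eq_mul, mul_one]
            congr 1
            omega
        _ = (b:ℝ) - a := by
            rw [Nat.cast_sub hab]
    have : (∑ k ∈ Finset.Icc 1 b, Y k ω) - ∑ k ∈ Finset.Icc 1 a, Y k ω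
        = ∑ k ∈ Finset.Ico (a+1) (b+1), Y k ω := by
      rw [← hsplit]
      ring
    rw [this]
    exact habs
  exact lyons_det (fun n => ∑ k ∈ Finset.Icc 1 n, Y k ω) hdrift h1
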